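/- Define F(X) = AᵀS(X)A + α·tr(X)·CᵀC where S(X) = X − XB(α·tr(X)·R + BᵀXB)⁻¹BᵀX, with R ≻ 0 and α > 0. Then F is positively homogeneous of degree 1 and order-preserving on the cone of positive semidefinite matrices (X ⪰ Y ⪰ 0 implies F(X) ⪰ F(Y) ⪰ 0). -/

import Mathlib

open Matrix

/-- The homogenized Riccati operator
`F(X) = AᵀS(X)A + α·tr(X)·CᵀC`, `S(X) = X − XB(α·tr(X)·R + BᵀXB)⁻¹BᵀX`. -/
noncomputable def riccOp {n m p : ℕ} (A : Matrix (Fin n) (Fin n) ℝ)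
    (B : Matrix (Fin n) (Fin m) ℝ) (C : Matrix (Fin p) (Fin n) ℝ)
    (R : Matrix (Fin m) (Fin m) ℝ) (α : ℝ)
    (X : Matrix (Fin n) (Fin n) ℝ) : Matrix (Fin n) (Fin n) ℝ :=
  Aᵀ * (X - X * B * ((α * X.trace) • R + Bᵀ * X * B)⁻¹ * Bᵀ * X) * A
    + (α * X.trace) • (Cᵀ * C)

section RiccAux

variable {n m p k : ℕ}

private lemma rc_psd_conj {X : Matrix (Fin n) (Fin n) ℝ} (hX : X.PosSemidef)
    (G : Matrix (Fin k) (Fin n) ℝ) : (G * X * Gᵀ).PosSemidef := by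
  simpa [conjTranspose_eq_transpose_of_trivial] using hX.mul_mul_conjTranspose_same G

private lemma rc_psd_smul {X : Matrix (Fin n) (Fin n) ℝ} (hX : X.PosSemidef) {c : ℝ}
    (hc : 0 ≤ c) : (c • X).PosSemidef := by
  refine ⟨?_, fun x => ?_⟩
  · unfold Matrix.IsHermitian
    rw [conjTranspose_eq_transpose_of_trivial, transpose_smul,
      ← conjTranspose_eq_transpose_of_trivial, hX.1]
  · exact (hX.smul hc).2 x

private lemma rc_posdef_smul {X : Matrix (Fin n) (Fin n) ℝ} (hX : X.PosDef) {c : ℝ}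
    (hc : 0 < c) : (c • X).PosDef := by
  refine ⟨?_, fun x hx => ?_⟩
  · unfold Matrix.IsHermitian
    rw [conjTranspose_eq_transpose_of_trivial, transpose_smul,
      ← conjTranspose_eq_transpose_of_trivial, hX.1]
  · exact (hX.smul hc).2 hx

private lemma rc_psd_diag {X : Matrix (Fin n) (Fin n) ℝ} (hX : X.PosSemidef) (i : Fin n) :
    0 ≤ X i i := by
  exact hX.diag_nonneg

private lemma rc_psd_trace_nonneg {X : Matrix (Fin n) (Fin n) ℝ} (hX : X.PosSemidef) :
    0 ≤ X.trace :=
  Finset.sum_nonneg fun i _ => rc_psd_diag hX i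

private lemma rc_psd_trace_eq_zero {X : Matrix (Fin n) (Fin n) ℝ} (hX : X.PosSemidef)
    (h : X.trace = 0) : X = 0 := by
  have hdiag : ∀ i, X i i = 0 := fun i =>
    (Finset.sum_eq_zero_iff_of_nonneg
      (fun i _ => rc_psd_diag hX i)).mp h i (Finset.mem_univ i)
  have hcol : ∀ i, X *ᵥ Pi.single i 1 = 0 := by
    intro i
    apply (hX.dotProduct_mulVec_zero_iff _).mp
    simpa [mulVec_single, single_dotProduct] using hdiag i
  ext i j
  have := congrFun (hcol j) i
  simpa [mulVec_single] using this

private lemma rc_key2 (X Y : Matrix (Fin n) (Fin n) ℝ) (MX MY : Matrix (Fin m) (Fin m) ℝ)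
    (B : Matrix (Fin n) (Fin m) ℝ)
    (P : Matrix (Fin n) (Fin m) ℝ) (Pt : Matrix (Fin m) (Fin n) ℝ) :
    (X - P * Bᵀ * X - X * B * Pt + P * MX * Pt)
      - (Y - P * Bᵀ * Y - Y * B * Pt + P * MY * Pt)
      = (1 - P * Bᵀ) * (X - Y) * (1 - B * Pt)
        + P * (MX - MY - Bᵀ * (X - Y) * B) * Pt := by
  simp only [Matrix.mul_sub, Matrix.sub_mul, Matrix.mul_add, Matrix.add_mul,
    Matrix.mul_one, Matrix.one_mul, Matrix.mul_assoc]
  abel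

private lemma rc_key1 (X : Matrix (Fin n) (Fin n) ℝ) (M N : Matrix (Fin m) (Fin m) ℝ)
    (B : Matrix (Fin n) (Fin m) ℝ)
    (hMN : M * N = 1) :
    X - X * B * N * Bᵀ * X
      = X - (X * B * N) * Bᵀ * X - X * B * (N * Bᵀ * X)
        + (X * B * N) * M * (N * Bᵀ * X) := by
  have h1 : ∀ Z : Matrix (Fin m) (Fin n) ℝ, M * (N * Z) = Z := fun Z => by
    rw [← Matrix.mul_assoc, hMN, Matrix.one_mul]
  simp only [Matrix.mul_assoc, h1]
  abel

private lemma rc_key3 (Y : Matrix (Fin n) (Fin n) ℝ) (M N : Matrix (Fin m) (Fin m) ℝ)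
    (B : Matrix (Fin n) (Fin m) ℝ)
    (P : Matrix (Fin n) (Fin m) ℝ) (Pt : Matrix (Fin m) (Fin n) ℝ)
    (hMN : M * N = 1) (hNM : N * M = 1) :
    (Y - P * Bᵀ * Y - Y * B * Pt + P * M * Pt)
      - (Y - Y * B * N * Bᵀ * Y)
      = (P - Y * B * N) * M * (Pt - N * Bᵀ * Y) := by
  have h1 : ∀ Z : Matrix (Fin m) (Fin n) ℝ, M * (N * Z) = Z := fun Z => by
    rw [← Matrix.mul_assoc, hMN, Matrix.one_mul]
  have h2 : ∀ Z : Matrix (Fin m) (Fin n) ℝ, N * (M * Z) = Z := fun Z => by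
    rw [← Matrix.mul_assoc, hNM, Matrix.one_mul]
  simp only [Matrix.mul_sub, Matrix.sub_mul, Matrix.mul_assoc, h1, h2]
  abel

private lemma rc_key4 (Y : Matrix (Fin n) (Fin n) ℝ) (M : Matrix (Fin m) (Fin m) ℝ)
    (B : Matrix (Fin n) (Fin m) ℝ)
    (P : Matrix (Fin n) (Fin m) ℝ) (Pt : Matrix (Fin m) (Fin n) ℝ) :
    Y - P * Bᵀ * Y - Y * B * Pt + P * M * Pt
      = (1 - P * Bᵀ) * Y * (1 - B * Pt) + P * (M - Bᵀ * Y * B) * Pt := by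
  simp only [Matrix.mul_sub, Matrix.sub_mul, Matrix.mul_one, Matrix.one_mul,
    Matrix.mul_assoc]
  abel

private lemma rc_smul_inv (c : ℝ) (hc : c ≠ 0) (M : Matrix (Fin m) (Fin m) ℝ) :
    (c • M)⁻¹ = c⁻¹ • M⁻¹ := by
  by_cases h : IsUnit M.det
  · have : Invertible c := invertibleOfNonzero hc
    rw [M.inv_smul c h, invOf_eq_inv c]
  · rw [Matrix.nonsing_inv_apply_not_isUnit _ h, Matrix.nonsing_inv_apply_not_isUnit, smul_zero]
    rw [Matrix.det_smul]
    intro hu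
    exact h (IsUnit.mul_iff.mp hu).2

private lemma rc_homog (A : Matrix (Fin n) (Fin n) ℝ) (B : Matrix (Fin n) (Fin m) ℝ)
    (C : Matrix (Fin p) (Fin n) ℝ) (R : Matrix (Fin m) (Fin m) ℝ) (α : ℝ)
    (c : ℝ) (hc : 0 < c) (X : Matrix (Fin n) (Fin n) ℝ) :
    riccOp A B C R α (c • X) = c • riccOp A B C R α X := by
  have hc0 : c ≠ 0 := hc.ne'
  unfold riccOp
  have ht : (c • X).trace = c * X.trace := by
    rw [trace_smul]; simp [smul_eq_mul]
  have hM : (α * (c • X).trace) • R + Bᵀ * (c • X) * B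
      = c • ((α * X.trace) • R + Bᵀ * X * B) := by
    rw [ht, smul_add, smul_smul, Matrix.mul_smul, Matrix.smul_mul]
    ring_nf
  rw [hM, rc_smul_inv c hc0]
  set N := ((α * X.trace) • R + Bᵀ * X * B)⁻¹ with hN
  have h2 : (c • X) * B * (c⁻¹ • N) * Bᵀ * (c • X) = c • (X * B * N * Bᵀ * X) := by
    simp only [Matrix.smul_mul, Matrix.mul_smul, smul_smul]
    rw [show c * (c⁻¹ * c) = c by field_simp]
  rw [h2, ht, ← smul_sub, Matrix.mul_smul, Matrix.smul_mul, smul_add, smul_smul]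
  ring_nf

end RiccAux

/-- `F` is positively homogeneous of degree one and order-preserving on the
PSD cone. -/
theorem riccOp_homogeneous_and_orderPreserving
    {n m p : ℕ} (A : Matrix (Fin n) (Fin n) ℝ) (B : Matrix (Fin n) (Fin m) ℝ)
    (C : Matrix (Fin p) (Fin n) ℝ) (R : Matrix (Fin m) (Fin m) ℝ)
    (α : ℝ) (hα : 0 < α) (hR : R.PosDef) :
    (∀ (c : ℝ), 0 < c → ∀ X : Matrix (Fin n) (Fin n) ℝ, X.PosSemidef →
        riccOp A B C R α (c • X) = c • riccOp A B C R α X) ∧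
      (∀ X Y : Matrix (Fin n) (Fin n) ℝ, Y.PosSemidef → (X - Y).PosSemidef →
        (riccOp A B C R α X - riccOp A B C R α Y).PosSemidef ∧
          (riccOp A B C R α Y).PosSemidef) := by
  -- common facts
  have hCC : (Cᵀ * C).PosSemidef := by
    simpa [conjTranspose_eq_transpose_of_trivial] using posSemidef_conjTranspose_mul_self C
  have hricc0 : riccOp A B C R α 0 = 0 := by
    simp [riccOp]
  -- the matrix M(X) and its properties
  have hMdef : ∀ X : Matrix (Fin n) (Fin n) ℝ, X.PosSemidef → 0 < X.trace →
      ((α * X.trace) • R + Bᵀ * X * B).PosDef := by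
    intro X hX ht
    have h1 : ((α * X.trace) • R).PosDef := rc_posdef_smul hR (mul_pos hα ht)
    have h2 : (Bᵀ * X * B).PosSemidef := by
      have := rc_psd_conj hX Bᵀ
      simpa [transpose_transpose] using this
    exact h1.add_posSemidef h2
  -- `S X` is PSD, via the completed-square identity
  have hSpsd : ∀ X : Matrix (Fin n) (Fin n) ℝ, X.PosSemidef → 0 < X.trace →
      (X - X * B * ((α * X.trace) • R + Bᵀ * X * B)⁻¹ * Bᵀ * X).PosSemidef := by
    intro X hX ht
    set M := (α * X.trace) • R + Bᵀ * X * B with hMeq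
    have hM : M.PosDef := hMdef X hX ht
    have hdet : IsUnit M.det := hM.det_pos.ne'.isUnit
    have hMN : M * M⁻¹ = 1 := Matrix.mul_nonsing_inv M hdet
    have hXt : Xᵀ = X := by
      rw [← conjTranspose_eq_transpose_of_trivial, hX.1]
    have hMt : Mᵀ = M := by
      rw [← conjTranspose_eq_transpose_of_trivial, hM.1]
    have hNt : (M⁻¹)ᵀ = M⁻¹ := by rw [Matrix.transpose_nonsing_inv, hMt]
    have hPt : (X * B * M⁻¹)ᵀ = M⁻¹ * Bᵀ * X := by
      simp [transpose_mul, hNt, hXt, Matrix.mul_assoc]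
    have hkey : X - X * B * M⁻¹ * Bᵀ * X
        = (1 - (X * B * M⁻¹) * Bᵀ) * X * (1 - B * (M⁻¹ * Bᵀ * X))
          + (X * B * M⁻¹) * ((α * X.trace) • R) * (M⁻¹ * Bᵀ * X) := by
      rw [rc_key1 X M M⁻¹ B hMN, rc_key4,
        show M - Bᵀ * X * B = (α * X.trace) • R from by
          rw [hMeq]; exact add_sub_cancel_right _ _]
    rw [hkey]
    apply Matrix.PosSemidef.add
    · have := rc_psd_conj hX (1 - (X * B * M⁻¹) * Bᵀ)
      have htr : (1 - (X * B * M⁻¹) * Bᵀ)ᵀ = 1 - B * (M⁻¹ * Bᵀ * X) := by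
        simp [transpose_sub, transpose_mul, hNt, hXt, Matrix.mul_assoc]
      rwa [htr] at this
    · have hDR : ((α * X.trace) • R).PosSemidef :=
        rc_psd_smul hR.posSemidef (le_of_lt (mul_pos hα ht))
      have := rc_psd_conj hDR (X * B * M⁻¹)
      rwa [hPt] at this
  -- riccOp is PSD on PSD matrices
  have hriccPsd : ∀ X : Matrix (Fin n) (Fin n) ℝ, X.PosSemidef →
      (riccOp A B C R α X).PosSemidef := by
    intro X hX
    rcases eq_or_lt_of_le (rc_psd_trace_nonneg hX) with ht | ht
    · rw [rc_psd_trace_eq_zero hX ht.symm, hricc0]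
      exact Matrix.PosSemidef.zero
    · unfold riccOp
      apply Matrix.PosSemidef.add
      · have := rc_psd_conj (hSpsd X hX ht) Aᵀ
        rwa [transpose_transpose] at this
      · exact rc_psd_smul hCC (le_of_lt (mul_pos hα ht))
  refine ⟨fun c hc X _ => rc_homog A B C R α c hc X, fun X Y hY hXY => ?_⟩
  have hX : X.PosSemidef := by
    have := hXY.add hY
    simpa using this
  refine ⟨?_, hriccPsd Y hY⟩
  rcases eq_or_lt_of_le (rc_psd_trace_nonneg hY) with htY | htY
  · rw [rc_psd_trace_eq_zero hY htY.symm, hricc0, sub_zero]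
    exact hriccPsd X hX
  · -- main monotonicity case : tr Y > 0, hence tr X > 0
    have htXY : Y.trace ≤ X.trace := by
      have h0 : 0 ≤ (X - Y).trace := rc_psd_trace_nonneg hXY
      rw [trace_sub] at h0
      linarith
    have htX : 0 < X.trace := lt_of_lt_of_le htY htXY
    set MX := (α * X.trace) • R + Bᵀ * X * B with hMXeq
    set MY := (α * Y.trace) • R + Bᵀ * Y * B with hMYeq
    have hMXd : MX.PosDef := hMdef X hX htX
    have hMYd : MY.PosDef := hMdef Y hY htY
    have hMXdet : IsUnit MX.det := hMXd.det_pos.ne'.isUnit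
    have hMYdet : IsUnit MY.det := hMYd.det_pos.ne'.isUnit
    have hMXN : MX * MX⁻¹ = 1 := Matrix.mul_nonsing_inv MX hMXdet
    have hMYN : MY * MY⁻¹ = 1 := Matrix.mul_nonsing_inv MY hMYdet
    have hNMY : MY⁻¹ * MY = 1 := Matrix.nonsing_inv_mul MY hMYdet
    have hXt : Xᵀ = X := by rw [← conjTranspose_eq_transpose_of_trivial, hX.1]
    have hYt : Yᵀ = Y := by rw [← conjTranspose_eq_transpose_of_trivial, hY.1]
    have hMXt : MXᵀ = MX := by rw [← conjTranspose_eq_transpose_of_trivial, hMXd.1]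
    have hMYt : MYᵀ = MY := by rw [← conjTranspose_eq_transpose_of_trivial, hMYd.1]
    have hNXt : (MX⁻¹)ᵀ = MX⁻¹ := by rw [Matrix.transpose_nonsing_inv, hMXt]
    have hNYt : (MY⁻¹)ᵀ = MY⁻¹ := by rw [Matrix.transpose_nonsing_inv, hMYt]
    -- the optimizer for X
    set P := X * B * MX⁻¹ with hPdef
    set Pt := MX⁻¹ * Bᵀ * X with hPtdef
    have hPt : Pᵀ = Pt := by
      rw [hPdef, hPtdef]
      simp [transpose_mul, hNXt, hXt, Matrix.mul_assoc]
    -- the D-term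
    have hDterm : MX - MY - Bᵀ * (X - Y) * B = (α * (X.trace - Y.trace)) • R := by
      rw [hMXeq, hMYeq, Matrix.mul_sub, Matrix.sub_mul, mul_sub, sub_smul]
      abel
    -- master decomposition
    have hmaster : (X - X * B * MX⁻¹ * Bᵀ * X) - (Y - Y * B * MY⁻¹ * Bᵀ * Y)
        = ((1 - P * Bᵀ) * (X - Y) * (1 - B * Pt)
            + P * ((α * (X.trace - Y.trace)) • R) * Pt)
          + (P - Y * B * MY⁻¹) * MY * (Pt - MY⁻¹ * Bᵀ * Y) := by
      rw [rc_key1 X MX MX⁻¹ B hMXN]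
      have e2 := rc_key2 X Y MX MY B P Pt
      have e3 := rc_key3 Y MY MY⁻¹ B P Pt hMYN hNMY
      calc (X - P * Bᵀ * X - X * B * Pt + P * MX * Pt) - (Y - Y * B * MY⁻¹ * Bᵀ * Y)
          = ((X - P * Bᵀ * X - X * B * Pt + P * MX * Pt)
              - (Y - P * Bᵀ * Y - Y * B * Pt + P * MY * Pt))
            + ((Y - P * Bᵀ * Y - Y * B * Pt + P * MY * Pt)
              - (Y - Y * B * MY⁻¹ * Bᵀ * Y)) := by abel
        _ = ((1 - P * Bᵀ) * (X - Y) * (1 - B * Pt)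
              + P * (MX - MY - Bᵀ * (X - Y) * B) * Pt)
            + (P - Y * B * MY⁻¹) * MY * (Pt - MY⁻¹ * Bᵀ * Y) := by rw [e2, e3]
        _ = _ := by rw [hDterm]
    -- difference of riccOp
    have hdiff : riccOp A B C R α X - riccOp A B C R α Y
        = Aᵀ * ((X - X * B * MX⁻¹ * Bᵀ * X) - (Y - Y * B * MY⁻¹ * Bᵀ * Y)) * A
          + (α * (X.trace - Y.trace)) • (Cᵀ * C) := by
      unfold riccOp
      rw [← hMXeq, ← hMYeq]
      simp only [Matrix.mul_sub, Matrix.sub_mul, mul_sub, sub_smul]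
      abel
    rw [hdiff, hmaster]
    have htdiff : 0 ≤ X.trace - Y.trace := by linarith
    apply Matrix.PosSemidef.add
    · have hinner : ((1 - P * Bᵀ) * (X - Y) * (1 - B * Pt)
          + P * ((α * (X.trace - Y.trace)) • R) * Pt
          + (P - Y * B * MY⁻¹) * MY * (Pt - MY⁻¹ * Bᵀ * Y)).PosSemidef := by
        apply Matrix.PosSemidef.add
        apply Matrix.PosSemidef.add
        · have := rc_psd_conj hXY (1 - P * Bᵀ)
          have htr : (1 - P * Bᵀ)ᵀ = 1 - B * Pt := by
            rw [transpose_sub, transpose_one, transpose_mul, transpose_transpose, hPt]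
          rwa [htr] at this
        · have hDR : ((α * (X.trace - Y.trace)) • R).PosSemidef :=
            rc_psd_smul hR.posSemidef (mul_nonneg hα.le htdiff)
          have := rc_psd_conj hDR P
          rwa [hPt] at this
        · have := rc_psd_conj hMYd.posSemidef (P - Y * B * MY⁻¹)
          have htr : (P - Y * B * MY⁻¹)ᵀ = Pt - MY⁻¹ * Bᵀ * Y := by
            rw [transpose_sub, hPt]
            simp [transpose_mul, hNYt, hYt, Matrix.mul_assoc]
          rwa [htr] at this
      have := rc_psd_conj hinner Aᵀ
      rwa [transpose_transpose] at this
    · exact rc_psd_smul hCC (mul_nonneg hα.le htdiff)
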